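/- Let r and n be natural numbers with n ≥ 0, and let m_0,…,m_n be natural numbers with Σ_{i=0}^{n}(m_i+1) ≤ r+1. Define p_0 = 0, p_i = p_{i−1} + m_{i−1} + 1 for i = 1,…,n, and q_i = r − m_i − p_i for i = 0,…,n. Then for all natural numbers s, t, the following identity holds in the integers: Σ_{i=0}^{n} [ Σ_{ℓ=0}^{m_i} C(s+q_i+ℓ, q_i+ℓ)·C(t+p_i+m_i−ℓ, p_i+m_i−ℓ) − Σ_{ℓ=0}^{m_i−1} C(s+q_i+ℓ, q_i+ℓ)·C(t+p_i+m_i−1−ℓ, p_i+m_i−1−ℓ) ] − Σ_{i=1}^{n} C(s+r−p_i, r−p_i)·C(t+p_i−1, p_i−1) = Σ_{ℓ=0}^{p_n+m_n} C(s+r−ℓ, r−ℓ)·C(t+ℓ, ℓ) − Σ_{ℓ=0}^{p_n+m_n−1} C(s+r−1−ℓ, r−1−ℓ)·C(t+ℓ, ℓ). -/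

import Mathlib

lemma sumA_aux (F : ℕ → ℤ) :
    ∀ (n : ℕ) (P M : ℕ → ℕ), P 0 = 0 → (∀ k < n, P (k+1) = P k + M k + 1) →
      ∑ i ∈ Finset.range (n+1), ∑ ℓ ∈ Finset.range (M i + 1), F (P i + ℓ)
        = ∑ j ∈ Finset.range (P n + M n + 1), F j := by
  intro n
  induction n with
  | zero => intro P M h0 _; simp [h0]
  | succ n ih =>
      intro P M h0 hrec
      rw [Finset.sum_range_succ, ih P M h0 (fun k hk => hrec k (by omega)),
        hrec n (by omega)]
      conv_rhs => rw [show P n + M n + 1 + M (n+1) + 1 = (P n + M n + 1) + (M (n+1) + 1) by ring,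
        Finset.sum_range_add]

lemma sumB_aux (G : ℕ → ℤ) :
    ∀ (n : ℕ) (P M : ℕ → ℕ), P 0 = 0 → (∀ k < n, P (k+1) = P k + M k + 1) →
      (∑ i ∈ Finset.range (n+1), ∑ ℓ ∈ Finset.range (M i), G (P i + ℓ))
        + ∑ i ∈ Finset.range n, G (P i + M i)
        = ∑ j ∈ Finset.range (P n + M n), G j := by
  intro n
  induction n with
  | zero => intro P M h0 _; simp [h0]
  | succ n ih =>
      intro P M h0 hrec
      have hih := ih P M h0 (fun k hk => hrec k (by omega))
      rw [Finset.sum_range_succ, Finset.sum_range_succ]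
      conv_rhs => rw [show P (n+1) + M (n+1) = (P n + M n + 1) + M (n+1) by
          rw [hrec n (by omega)],
        Finset.sum_range_add, show P n + M n + 1 = (P n + M n) + 1 by ring,
        Finset.sum_range_add]
      rw [← hih, hrec n (by omega), Finset.sum_range_succ, Finset.sum_range_succ
        (fun x => ∑ ℓ ∈ Finset.range (M x), G (P x + ℓ))]
      simp
      ring

lemma partial_aux :
    ∀ (n : ℕ) (P M : ℕ → ℕ), P 0 = 0 → (∀ k < n, P (k+1) = P k + M k + 1) →
      ∀ k ≤ n, P k = ∑ j ∈ Finset.range k, (M j + 1) := by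
  intro n P M h0 hrec k
  induction k with
  | zero => intro _; simpa using h0
  | succ k ih =>
      intro hk
      rw [hrec k (by omega), ih (by omega), Finset.sum_range_succ]
      ring

theorem hilbert_inclusion_exclusion (r n : ℕ)
    (m : Fin (n + 1) → ℕ) (hm : (∑ i, (m i + 1)) ≤ r + 1)
    (p q : Fin (n + 1) → ℕ) (hp0 : p 0 = 0)
    (hp : ∀ i : Fin n, p i.succ = p i.castSucc + m i.castSucc + 1)
    (hq : ∀ i, q i = r - m i - p i)
    (s t : ℕ) :
    (∑ i : Fin (n + 1),
        ((∑ ℓ ∈ Finset.range (m i + 1),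
            ((s + (q i + ℓ)).choose (q i + ℓ)
              * (t + (p i + m i - ℓ)).choose (p i + m i - ℓ) : ℤ))
          - ∑ ℓ ∈ Finset.range (m i),
            ((s + (q i + ℓ)).choose (q i + ℓ)
              * (t + (p i + m i - 1 - ℓ)).choose (p i + m i - 1 - ℓ) : ℤ)))
      - ∑ i : Fin n,
          ((s + (r - p i.succ)).choose (r - p i.succ)
            * (t + (p i.succ - 1)).choose (p i.succ - 1) : ℤ)
      = (∑ ℓ ∈ Finset.range (p (Fin.last n) + m (Fin.last n) + 1),
          ((s + (r - ℓ)).choose (r - ℓ) * (t + ℓ).choose ℓ : ℤ))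
        - ∑ ℓ ∈ Finset.range (p (Fin.last n) + m (Fin.last n)),
          ((s + (r - 1 - ℓ)).choose (r - 1 - ℓ) * (t + ℓ).choose ℓ : ℤ) := by
  set F : ℕ → ℤ := fun j => ((s + (r - j)).choose (r - j) * (t + j).choose j : ℤ) with hF
  set G : ℕ → ℤ := fun j => ((s + (r - 1 - j)).choose (r - 1 - j) * (t + j).choose j : ℤ) with hG
  set P : ℕ → ℕ := fun k => p ⟨min k n, by omega⟩ with hPdef
  set M : ℕ → ℕ := fun k => m ⟨min k n, by omega⟩ with hMdef
  have hPi : ∀ i : Fin (n+1), P i.val = p i := by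
    intro i
    have : min i.val n = i.val := by omega
    simp only [hPdef, this]
  have hMi : ∀ i : Fin (n+1), M i.val = m i := by
    intro i
    have : min i.val n = i.val := by omega
    simp only [hMdef, this]
  have hP0 : P 0 = 0 := by
    have := hPi 0; simpa [hp0] using this
  have hrec : ∀ k < n, P (k+1) = P k + M k + 1 := by
    intro k hk
    have h1 : P (k+1) = p ((⟨k, hk⟩ : Fin n).succ) := by
      have : min (k+1) n = k+1 := by omega
      simp only [hPdef, this]; rfl
    have h2 : P k = p ((⟨k, hk⟩ : Fin n).castSucc) := by
      have : min k n = k := by omega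
      simp only [hPdef, this]; rfl
    have h3 : M k = m ((⟨k, hk⟩ : Fin n).castSucc) := by
      have : min k n = k := by omega
      simp only [hMdef, this]; rfl
    rw [h1, h2, h3, hp ⟨k, hk⟩]
  have hsum : ∀ k ≤ n, P k + M k + 1 = ∑ j ∈ Finset.range (k+1), (M j + 1) := by
    intro k hk
    rw [Finset.sum_range_succ, ← partial_aux n P M hP0 hrec k hk]
    ring
  have htot : P n + M n + 1 ≤ r + 1 := by
    rw [hsum n le_rfl]
    calc ∑ j ∈ Finset.range (n+1), (M j + 1)
        = ∑ i : Fin (n+1), (M i.val + 1) := (Fin.sum_univ_eq_sum_range (fun j => M j + 1) (n+1)).symm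
      _ = ∑ i : Fin (n+1), (m i + 1) := by
          exact Finset.sum_congr rfl fun i _ => by rw [hMi]
      _ ≤ r + 1 := hm
  have hbound : ∀ k ≤ n, P k + M k ≤ r := by
    intro k hk
    have h1 := hsum k hk
    have h2 : ∑ j ∈ Finset.range (k+1), (M j + 1) ≤ ∑ j ∈ Finset.range (n+1), (M j + 1) :=
      Finset.sum_le_sum_of_subset (Finset.range_subset_range.mpr (by omega))
    have h3 := hsum n le_rfl
    omega
  -- last values
  have hPlast : p (Fin.last n) = P n := (hPi (Fin.last n)).symm
  have hMlast : m (Fin.last n) = M n := (hMi (Fin.last n)).symm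
  -- rewrite the A-sums
  have hA : ∀ i : Fin (n+1),
      (∑ ℓ ∈ Finset.range (m i + 1),
        ((s + (q i + ℓ)).choose (q i + ℓ)
          * (t + (p i + m i - ℓ)).choose (p i + m i - ℓ) : ℤ))
      = ∑ ℓ ∈ Finset.range (M i.val + 1), F (P i.val + ℓ) := by
    intro i
    rw [hMi, hPi, ← Finset.sum_range_reflect (fun ℓ => F (p i + ℓ)) (m i + 1)]
    refine Finset.sum_congr rfl fun ℓ hℓ => ?_
    rw [Finset.mem_range] at hℓ
    have hb : p i + m i ≤ r := by
      have := hbound i.val (by omega)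
      rw [hPi, hMi] at this; exact this
    have hqi := hq i
    have e1 : q i + ℓ = r - (p i + (m i + 1 - 1 - ℓ)) := by omega
    have e2 : p i + m i - ℓ = p i + (m i + 1 - 1 - ℓ) := by omega
    simp only [hF, e1, e2]
  have hB : ∀ i : Fin (n+1),
      (∑ ℓ ∈ Finset.range (m i),
        ((s + (q i + ℓ)).choose (q i + ℓ)
          * (t + (p i + m i - 1 - ℓ)).choose (p i + m i - 1 - ℓ) : ℤ))
      = ∑ ℓ ∈ Finset.range (M i.val), G (P i.val + ℓ) := by
    intro i
    rw [hMi, hPi, ← Finset.sum_range_reflect (fun ℓ => G (p i + ℓ)) (m i)]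
    refine Finset.sum_congr rfl fun ℓ hℓ => ?_
    rw [Finset.mem_range] at hℓ
    have hb : p i + m i ≤ r := by
      have := hbound i.val (by omega)
      rw [hPi, hMi] at this; exact this
    have hqi := hq i
    have e1 : q i + ℓ = r - 1 - (p i + (m i - 1 - ℓ)) := by omega
    have e2 : p i + m i - 1 - ℓ = p i + (m i - 1 - ℓ) := by omega
    simp only [hG, e1, e2]
  have hGap : ∀ i : Fin n,
      ((s + (r - p i.succ)).choose (r - p i.succ)
        * (t + (p i.succ - 1)).choose (p i.succ - 1) : ℤ)
      = G (P i.val + M i.val) := by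
    intro i
    have hps : p i.succ = P i.val + M i.val + 1 := by
      have h1 : P (i.val + 1) = p i.succ := by
        have : min (i.val+1) n = i.val + 1 := by omega
        simp only [hPdef, this]; rfl
      rw [← h1, hrec i.val i.isLt]
    have e1 : r - p i.succ = r - 1 - (P i.val + M i.val) := by omega
    have e2 : p i.succ - 1 = P i.val + M i.val := by omega
    simp only [hG, e1, e2]
  calc
    (∑ i : Fin (n + 1),
        ((∑ ℓ ∈ Finset.range (m i + 1),
            ((s + (q i + ℓ)).choose (q i + ℓ)
              * (t + (p i + m i - ℓ)).choose (p i + m i - ℓ) : ℤ))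
          - ∑ ℓ ∈ Finset.range (m i),
            ((s + (q i + ℓ)).choose (q i + ℓ)
              * (t + (p i + m i - 1 - ℓ)).choose (p i + m i - 1 - ℓ) : ℤ)))
      - ∑ i : Fin n,
          ((s + (r - p i.succ)).choose (r - p i.succ)
            * (t + (p i.succ - 1)).choose (p i.succ - 1) : ℤ)
        = (∑ i : Fin (n+1), (∑ ℓ ∈ Finset.range (M i.val + 1), F (P i.val + ℓ)
            - ∑ ℓ ∈ Finset.range (M i.val), G (P i.val + ℓ)))
          - ∑ i : Fin n, G (P i.val + M i.val) := by
          rw [Finset.sum_congr rfl (fun i _ => by rw [hA i, hB i]),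
            Finset.sum_congr rfl (fun (i : Fin n) _ => hGap i)]
    _ = (∑ i ∈ Finset.range (n+1), ∑ ℓ ∈ Finset.range (M i + 1), F (P i + ℓ))
          - ((∑ i ∈ Finset.range (n+1), ∑ ℓ ∈ Finset.range (M i), G (P i + ℓ))
            + ∑ i ∈ Finset.range n, G (P i + M i)) := by
          rw [Finset.sum_sub_distrib,
            Fin.sum_univ_eq_sum_range (fun k => ∑ ℓ ∈ Finset.range (M k + 1), F (P k + ℓ)) (n+1),
            Fin.sum_univ_eq_sum_range (fun k => ∑ ℓ ∈ Finset.range (M k), G (P k + ℓ)) (n+1),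
            Fin.sum_univ_eq_sum_range (fun k => G (P k + M k)) n]
          ring
    _ = (∑ j ∈ Finset.range (P n + M n + 1), F j)
          - ∑ j ∈ Finset.range (P n + M n), G j := by
          rw [sumA_aux F n P M hP0 hrec, sumB_aux G n P M hP0 hrec]
    _ = (∑ ℓ ∈ Finset.range (p (Fin.last n) + m (Fin.last n) + 1),
          ((s + (r - ℓ)).choose (r - ℓ) * (t + ℓ).choose ℓ : ℤ))
        - ∑ ℓ ∈ Finset.range (p (Fin.last n) + m (Fin.last n)),
          ((s + (r - 1 - ℓ)).choose (r - 1 - ℓ) * (t + ℓ).choose ℓ : ℤ) := by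
          rw [hPlast, hMlast]
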